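/- Let d ≥ 1 and n = 1 + d(d-1)/2. Then there exist linear maps J^i : ℝ^d → ℝ^n for i = 1, …, d with the following three properties: (a) each J^i is an isometry of ℝ^d into ℝ^n, i.e. ⟨J^i u, J^i v⟩ = ⟨u, v⟩ for all u, v ∈ ℝ^d; (b) for each unit vector u ∈ ℝ^d, the vectors J^1 u, …, J^d u are orthonormal in ℝ^n, i.e. ⟨J^i u, J^j u⟩ = δ^{ij}; (c) there is a unit vector e₀ ∈ ℝ^n such that Σ_{i=1}^d u^i (J^i u) = |u|² e₀ for every u = (u^1, …, u^d) ∈ ℝ^d. -/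

import Mathlib

open scoped RealInnerProductSpace
open Finset

section stmt0aux
variable {d : ℕ}

private abbrev Pty (d : ℕ) := {p : Fin d × Fin d // p.1 < p.2}

private def pequiv : Pty d ≃ Σ l : Fin d, Fin (l : ℕ) where
  toFun p := ⟨p.1.2, ⟨p.1.1, p.2⟩⟩
  invFun x := ⟨(⟨(x.2 : ℕ), x.2.2.trans x.1.2⟩, x.1), x.2.2⟩
  left_inv p := by rcases p with ⟨⟨k, l⟩, h⟩; rfl
  right_inv x := by rcases x with ⟨l, k⟩; rfl

private lemma card_idx : Fintype.card (Unit ⊕ Pty d) = 1 + d * (d - 1) / 2 := by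
  rw [Fintype.card_sum, Fintype.card_congr pequiv, Fintype.card_sigma]
  simp only [Fintype.card_fin, Fintype.card_unit]
  rw [Fin.sum_univ_eq_sum_range (fun m => m), Finset.sum_range_id]

private def jfun (i : Fin d) (u : Fin d → ℝ) : (Unit ⊕ Pty d) → ℝ
  | Sum.inl _ => u i
  | Sum.inr p => (if p.1.1 = i then u p.1.2 else 0) - (if p.1.2 = i then u p.1.1 else 0)

private def Jlin (i : Fin d) :
    EuclideanSpace ℝ (Fin d) →ₗ[ℝ] EuclideanSpace ℝ (Unit ⊕ Pty d) where
  toFun u := WithLp.toLp 2 (jfun i u)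
  map_add' u v := by
    ext x
    have h : ∀ m, (u + v) m = u m + v m := fun m => rfl
    cases x with
    | inl _ => show (u + v) i = u i + v i; rfl
    | inr p =>
      show jfun i (u + v) (Sum.inr p) = jfun i u (Sum.inr p) + jfun i v (Sum.inr p)
      simp only [jfun, h, Pi.add_apply]
      split_ifs <;> ring
  map_smul' c u := by
    ext x
    have h : ∀ m, (c • u) m = c * u m := fun m => rfl
    cases x with
    | inl _ => show (c • u) i = c * u i; rfl
    | inr p =>
      show jfun i (c • u) (Sum.inr p) = c * jfun i u (Sum.inr p)
      simp only [jfun, h, Pi.smul_apply, smul_eq_mul]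
      split_ifs <;> ring

private lemma tri (F : Fin d → Fin d → ℝ) (hsymm : ∀ k l, F k l = F l k)
    (hdiag : ∀ k, F k k = 0) :
    ∑ k : Fin d, ∑ l : Fin d, (if k < l then F k l else 0)
      = (∑ k : Fin d, ∑ l : Fin d, F k l) / 2 := by
  have h2 : (∑ k : Fin d, ∑ l : Fin d, (if k < l then F k l else 0)) * 2
      = ∑ k : Fin d, ∑ l : Fin d, F k l := by
    have hswap : ∑ k : Fin d, ∑ l : Fin d, (if k < l then F k l else 0)
        = ∑ k : Fin d, ∑ l : Fin d, (if l < k then F k l else 0) := by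
      rw [Finset.sum_comm]
      refine Finset.sum_congr rfl fun k _ => Finset.sum_congr rfl fun l _ => ?_
      rw [hsymm]
    calc (∑ k : Fin d, ∑ l : Fin d, (if k < l then F k l else 0)) * 2
        = (∑ k : Fin d, ∑ l : Fin d, (if k < l then F k l else 0))
          + (∑ k : Fin d, ∑ l : Fin d, (if l < k then F k l else 0)) := by
          rw [← hswap]; ring
      _ = ∑ k : Fin d, ∑ l : Fin d,
            ((if k < l then F k l else 0) + (if l < k then F k l else 0)) := by
          rw [← Finset.sum_add_distrib]
          exact Finset.sum_congr rfl fun k _ => (Finset.sum_add_distrib).symm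
      _ = ∑ k : Fin d, ∑ l : Fin d, F k l := by
          refine Finset.sum_congr rfl fun k _ => Finset.sum_congr rfl fun l _ => ?_
          rcases lt_trichotomy k l with h | h | h
          · simp [h, not_lt_of_gt h]
          · subst h; simp [hdiag]
          · simp [h, not_lt_of_gt h]
  linarith

private lemma full_sum (i j : Fin d) (u v : Fin d → ℝ) :
    ∑ k : Fin d, ∑ l : Fin d,
        ((if k = i then u l else 0) - (if l = i then u k else 0))
        * ((if k = j then v l else 0) - (if l = j then v k else 0))
      = (if i = j then ∑ m, u m * v m else 0) * 2 - 2 * (u j * v i) := by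
  simp only [sub_mul, mul_sub, ite_mul, mul_ite, zero_mul, mul_zero, zero_sub, sub_zero,
    Finset.sum_sub_distrib, Finset.sum_ite_eq, Finset.sum_ite_eq', Finset.mem_univ, if_true]
  by_cases h : i = j
  · subst h; simp; ring
  · simp [h, Ne.symm h]; ring

private lemma inner_J (i j : Fin d) (u v : EuclideanSpace ℝ (Fin d)) :
    ⟪Jlin i u, Jlin j v⟫ = (if i = j then ∑ m, u m * v m else 0)
      + (u i * v j - u j * v i) := by
  rw [PiLp.inner_apply]
  simp only [RCLike.inner_apply, conj_trivial, mul_comm ((Jlin j v) _)]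
  rw [Fintype.sum_sum_type]
  have h1 : ∑ x : Unit, (Jlin i u) (Sum.inl x) * (Jlin j v) (Sum.inl x) = u i * v j := by
    simp [Jlin, jfun]
  rw [h1]
  have h2 : ∑ p : Pty d, (Jlin i u) (Sum.inr p) * (Jlin j v) (Sum.inr p)
      = ∑ k : Fin d, ∑ l : Fin d, (if k < l then
          ((if k = i then u l else 0) - (if l = i then u k else 0))
          * ((if k = j then v l else 0) - (if l = j then v k else 0)) else 0) := by
    have hs := (Finset.sum_subtype (p := fun q : Fin d × Fin d => q.1 < q.2)
      (F := inferInstance) (Finset.univ.filter (fun q : Fin d × Fin d => q.1 < q.2))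
      (by simp) (fun q : Fin d × Fin d =>
        ((if q.1 = i then u q.2 else 0) - (if q.2 = i then u q.1 else 0))
        * ((if q.1 = j then v q.2 else 0) - (if q.2 = j then v q.1 else 0)))).symm
    rw [show (∑ p : Pty d, (Jlin i u) (Sum.inr p) * (Jlin j v) (Sum.inr p))
        = ∑ p : Pty d, ((if p.1.1 = i then u p.1.2 else 0) - (if p.1.2 = i then u p.1.1 else 0))
          * ((if p.1.1 = j then v p.1.2 else 0) - (if p.1.2 = j then v p.1.1 else 0)) from rfl,
      hs, Finset.sum_filter, Fintype.sum_prod_type]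
  rw [h2, tri _ (fun k l => by ring) (fun k => by ring), full_sum]
  ring

private lemma sum_J (u : EuclideanSpace ℝ (Fin d)) :
    ∑ i, u i • Jlin i u
      = (∑ m, u m * u m) • (EuclideanSpace.single (Sum.inl () : Unit ⊕ Pty d) (1:ℝ)) := by
  ext x
  rw [WithLp.ofLp_sum, Finset.sum_apply]
  simp only [PiLp.smul_apply, smul_eq_mul]
  cases x with
  | inl _ =>
    simp [Jlin, jfun, EuclideanSpace.single_apply]
  | inr p =>
    have : ∀ i : Fin d, (Jlin i u) (Sum.inr p)
        = (if p.1.1 = i then u p.1.2 else 0) - (if p.1.2 = i then u p.1.1 else 0) := fun i => rfl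
    simp only [this, EuclideanSpace.single_apply, mul_sub, mul_ite, mul_zero,
      Finset.sum_sub_distrib, Finset.sum_ite_eq, Finset.sum_ite_eq', Finset.mem_univ, if_true]
    simp
    ring

end stmt0aux



/-- For `d ≥ 1` and `n = 1 + d(d-1)/2` there exist linear maps
`J^i : ℝ^d → ℝ^n` (`i = 1, …, d`) such that (a) each `J^i` is an isometry,
(b) for each unit vector `u` the vectors `J^1 u, …, J^d u` are orthonormal,
and (c) there is a unit vector `e₀` with `∑ i, u^i (J^i u) = |u|² e₀`. -/
theorem stmt0 (d : ℕ) (hd : 1 ≤ d) :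
    ∃ J : Fin d → (EuclideanSpace ℝ (Fin d) →ₗ[ℝ]
        EuclideanSpace ℝ (Fin (1 + d * (d - 1) / 2))),
      (∀ i, ∀ u v : EuclideanSpace ℝ (Fin d), ⟪J i u, J i v⟫ = ⟪u, v⟫) ∧
      (∀ u : EuclideanSpace ℝ (Fin d), ‖u‖ = 1 →
        ∀ i j, ⟪J i u, J j u⟫ = if i = j then (1 : ℝ) else 0) ∧
      (∃ e₀ : EuclideanSpace ℝ (Fin (1 + d * (d - 1) / 2)), ‖e₀‖ = 1 ∧
        ∀ u : EuclideanSpace ℝ (Fin d),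
          ∑ i, u i • J i u = ‖u‖ ^ 2 • e₀) := by
  have Φ : EuclideanSpace ℝ (Unit ⊕ Pty d) ≃ₗᵢ[ℝ]
      EuclideanSpace ℝ (Fin (1 + d * (d - 1) / 2)) :=
    LinearIsometryEquiv.piLpCongrLeft 2 ℝ ℝ (Fintype.equivFinOfCardEq card_idx)
  have hinner : ∀ u v : EuclideanSpace ℝ (Fin d), ⟪u, v⟫ = ∑ m, u m * v m := by
    intro u v
    rw [PiLp.inner_apply]; simp [RCLike.inner_apply]
    exact Finset.sum_congr rfl fun _ _ => mul_comm _ _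
  refine ⟨fun i => Φ.toLinearIsometry.toLinearMap ∘ₗ Jlin i, ?_, ?_, ?_⟩
  · intro i u v
    have : ⟪Φ (Jlin i u), Φ (Jlin i v)⟫ = ⟪Jlin i u, Jlin i v⟫ := Φ.inner_map_map _ _
    simp only [LinearMap.comp_apply]
    rw [show (Φ.toLinearIsometry.toLinearMap (Jlin i u)) = Φ (Jlin i u) from rfl,
      show (Φ.toLinearIsometry.toLinearMap (Jlin i v)) = Φ (Jlin i v) from rfl,
      this, inner_J, hinner u v]
    simp
  · intro u hu i j
    have hsum : ∑ m, u m * u m = 1 := by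
      have := real_inner_self_eq_norm_sq u
      rw [hinner u u] at this
      rw [this, hu]; norm_num
    simp only [LinearMap.comp_apply]
    rw [show (Φ.toLinearIsometry.toLinearMap (Jlin i u)) = Φ (Jlin i u) from rfl,
      show (Φ.toLinearIsometry.toLinearMap (Jlin j u)) = Φ (Jlin j u) from rfl,
      Φ.inner_map_map, inner_J, hsum]
    by_cases h : i = j <;> simp [h] <;> ring
  · refine ⟨Φ (EuclideanSpace.single (Sum.inl ()) (1:ℝ)), ?_, ?_⟩
    · rw [Φ.norm_map, EuclideanSpace.norm_single]; norm_num
    · intro u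
      have hsum : ∑ m, u m * u m = ‖u‖ ^ 2 := by
        have := real_inner_self_eq_norm_sq u
        rw [hinner u u] at this
        exact this
      simp only [LinearMap.comp_apply]
      have : ∑ i, u i • Φ.toLinearIsometry.toLinearMap (Jlin i u)
          = Φ (∑ i, u i • Jlin i u) := by
        rw [map_sum]
        exact Finset.sum_congr rfl fun i _ => (Φ.map_smul _ _).symm
      rw [this, sum_J, Φ.map_smul, hsum]
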